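/- (Corollary 1.) Let Ξ ⊆ ℝ^{r−1} be a set of values of a parameter invariant under binomial subsampling, and for each ξ ∈ Ξ let M_ξ ∈ (0,∞]. For each ξ ∈ Ξ and μ ∈ (0, M_ξ) let f_{μ,ξ} be a probability mass function on ℕ with mean μ. Suppose the family is closed under binomial subsampling in the sense that T_p f_{μ,ξ} = f_{pμ,ξ} for all ξ ∈ Ξ, μ ∈ (0,M_ξ), p ∈ (0,1]. Then for each ξ ∈ Ξ there exists a real analytic function g(·, ξ) on (−2M_ξ, 0) such that Σ_n f_{μ,ξ}(n) t^n = g(μ(t−1), ξ) for all μ ∈ (0, M_ξ) and t ∈ (−1,1). Conversely, if the pgfs of the family have this form, the family is closed under binomial subsampling. -/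

import Mathlib

open scoped BigOperators ENNReal

/-- `f` is a probability mass function on `ℕ`. -/
def IsPMF (f : ℕ → ℝ) : Prop := (∀ n, 0 ≤ f n) ∧ HasSum f 1

/-- The binomial subsampling (independent `p`-thinning) of `f`:
`(T_p f)(m) = ∑_{n ≥ m} f(n) * C(n,m) * p^m * (1-p)^(n-m)` (written with `n = m + k`). -/
noncomputable def thin (p : ℝ) (f : ℕ → ℝ) : ℕ → ℝ :=
  fun m => ∑' k : ℕ, f (m + k) * ((m + k).choose m : ℝ) * p ^ m * (1 - p) ^ k

/-- The interval `(-2M, 0)` of real numbers, where `0 < M ≤ ∞` is an extended real number. -/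
def negIoo (M : ℝ≥0∞) : Set ℝ := {x : ℝ | x < 0 ∧ ENNReal.ofReal (-x) < 2 * M}

lemma binomial_inner_sum (f : ℕ → ℝ) (p s : ℝ) (n : ℕ) :
    ∑ ab ∈ Finset.HasAntidiagonal.antidiagonal n,
      f (ab.1 + ab.2) * ((ab.1 + ab.2).choose ab.1 : ℝ) * p ^ ab.1 * (1 - p) ^ ab.2 * s ^ ab.1
      = f n * (1 + p * (s - 1)) ^ n := by
  rw [Finset.Nat.sum_antidiagonal_eq_sum_range_succ_mk]
  have h1 : (1 + p * (s - 1)) = (p * s) + (1 - p) := by ring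
  rw [h1, add_pow, Finset.mul_sum]
  apply Finset.sum_congr rfl
  intro k hk
  have hk' : k ≤ n := Nat.lt_succ_iff.mp (Finset.mem_range.mp hk)
  have hkn : k + (n - k) = n := Nat.add_sub_cancel' hk'
  rw [hkn, mul_pow]
  ring

lemma thin_pgf (f : ℕ → ℝ) (hf : IsPMF f) {p : ℝ} (hp0 : 0 < p) (hp1 : p ≤ 1)
    {t : ℝ} (ht : |t| ≤ 1) :
    Summable (fun m => thin p f m * t ^ m) ∧
      ∑' m, thin p f m * t ^ m = ∑' n, f n * (1 + p * (t - 1)) ^ n := by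
  obtain ⟨hnn, hsum⟩ := hf
  set G : ℝ → ℕ × ℕ → ℝ := fun s x =>
    f (x.1 + x.2) * ((x.1 + x.2).choose x.1 : ℝ) * p ^ x.1 * (1 - p) ^ x.2 * s ^ x.1 with hG
  have hp1' : 0 ≤ 1 - p := by linarith
  have hGnn : ∀ s, 0 ≤ s → ∀ x, 0 ≤ G s x := by
    intro s hs x
    exact mul_nonneg (mul_nonneg (mul_nonneg (mul_nonneg (hnn _) (by positivity))
      (by positivity)) (by positivity)) (by positivity)
  set e := Finset.HasAntidiagonal.sigmaAntidiagonalEquivProd (A := ℕ) with he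
  -- fiber sums
  have hfiber : ∀ (s : ℝ) (n : ℕ),
      ∑' i : (Finset.HasAntidiagonal.antidiagonal n : Finset (ℕ × ℕ)), G s (e ⟨n, i⟩)
        = f n * (1 + p * (s - 1)) ^ n := by
    intro s n
    rw [tsum_fintype]
    simp only [he, Finset.HasAntidiagonal.sigmaAntidiagonalEquivProd_apply]
    rw [← binomial_inner_sum f p s n]
    exact Finset.sum_finset_coe _ _
  have hfibsummable : ∀ (s : ℝ) (n : ℕ),
      Summable fun i : (Finset.HasAntidiagonal.antidiagonal n : Finset (ℕ × ℕ)) => G s (e ⟨n, i⟩) :=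
    fun s n => (hasSum_fintype _).summable
  have habs_le_one : 0 ≤ 1 + p * (|t| - 1) ∧ 1 + p * (|t| - 1) ≤ 1 := by
    constructor
    · nlinarith [abs_nonneg t]
    · nlinarith [abs_nonneg t]
  have hGabs : Summable (G |t|) := by
    rw [← Equiv.summable_iff e]
    apply (summable_sigma_of_nonneg (fun x => hGnn _ (abs_nonneg t) _)).mpr
    refine ⟨hfibsummable |t|, ?_⟩
    apply Summable.of_nonneg_of_le (fun n => ?_) (fun n => ?_) hsum.summable
    · rw [hfiber]
      exact mul_nonneg (hnn n) (pow_nonneg habs_le_one.1 _)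
    · rw [hfiber]
      have hpow := pow_le_one₀ habs_le_one.1 habs_le_one.2 (n := n)
      nlinarith [hnn n]
  have habsG : ∀ x, ‖G t x‖ = G |t| x := by
    intro x
    simp only [hG, norm_mul, norm_pow]
    rw [Real.norm_of_nonneg (hnn _),
      Real.norm_of_nonneg (by positivity : (0:ℝ) ≤ ((x.1+x.2).choose x.1 : ℝ)),
      Real.norm_of_nonneg hp0.le, Real.norm_of_nonneg hp1']
    rfl
  have hGt : Summable (G t) := by
    apply Summable.of_norm_bounded hGabs
    intro x
    exact (habsG x).le
  have hinner : ∀ m, ∑' k, G t (m, k) = thin p f m * t ^ m := by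
    intro m
    rw [thin, ← tsum_mul_right]
  have houter : Summable fun m => ∑' k, G |t| (m, k) :=
    ((summable_prod_of_nonneg (fun x => hGnn _ (abs_nonneg t) x)).mp hGabs).2
  have hsummable : Summable fun m => thin p f m * t ^ m := by
    apply Summable.of_norm_bounded houter
    intro m
    rw [← hinner m]
    calc ‖∑' k, G t (m,k)‖ ≤ ∑' k, ‖G t (m,k)‖ :=
          norm_tsum_le_tsum_norm ((hGt.prod_factor m).norm)
      _ = ∑' k, G |t| (m,k) := tsum_congr fun k => habsG _
  refine ⟨hsummable, ?_⟩
  have h1 : ∑' m, thin p f m * t ^ m = ∑' x, G t x := by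
    rw [Summable.tsum_prod hGt]
    exact tsum_congr fun m => (hinner m).symm
  have h2 : ∑' x, G t x = ∑' n, f n * (1 + p * (t - 1)) ^ n := by
    rw [← e.tsum_eq (G t)]
    exact (Summable.tsum_sigma (e.summable_iff.mpr hGt)).trans (tsum_congr fun n => hfiber t n)
  rw [h1, h2]

open FormalMultilinearSeries in
lemma hasFPS_of_bound (a : ℕ → ℝ) (C : ℝ) (h : ∀ n, |a n| ≤ C) :
    HasFPowerSeriesOnBall (fun t => ∑' n, a n * t ^ n) (ofScalars ℝ a) 0 1 := by
  have hrad : 1 ≤ (ofScalars ℝ a).radius := by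
    apply FormalMultilinearSeries.le_radius_of_bound _ C
    intro n
    rw [ofScalars_norm]
    simpa using h n
  have h0 : (0:ℝ≥0∞) < (ofScalars ℝ a).radius := lt_of_lt_of_le one_pos hrad
  have H := ((ofScalars ℝ a).hasFPowerSeriesOnBall h0).mono one_pos hrad
  have hfun : (ofScalars ℝ a).sum = fun t => ∑' n, a n * t ^ n := by
    funext t
    rw [FormalMultilinearSeries.sum]
    exact tsum_congr fun n => by rw [ofScalars_apply_eq]; simp [smul_eq_mul]
  rwa [hfun] at H

lemma analyticAt_pgf (a : ℕ → ℝ) (C : ℝ) (h : ∀ n, |a n| ≤ C) {y : ℝ} (hy : |y| < 1) :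
    AnalyticAt ℝ (fun t => ∑' n, a n * t ^ n) y := by
  apply (hasFPS_of_bound a C h).analyticAt_of_mem
  rw [EMetric.mem_ball, edist_dist, Real.dist_eq, sub_zero]
  exact ENNReal.ofReal_lt_one.mpr hy

lemma coeff_unique (a b : ℕ → ℝ) (Ca Cb : ℝ) (ha : ∀ n, |a n| ≤ Ca) (hb : ∀ n, |b n| ≤ Cb)
    (h : ∀ t ∈ Set.Ioo (-1:ℝ) 1, ∑' n, a n * t ^ n = ∑' n, b n * t ^ n) : a = b := by
  have h1 := (hasFPS_of_bound a Ca ha).hasFPowerSeriesAt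
  have h2 := (hasFPS_of_bound b Cb hb).hasFPowerSeriesAt
  have heq : FormalMultilinearSeries.ofScalars ℝ a = FormalMultilinearSeries.ofScalars ℝ b := by
    apply h1.eq_formalMultilinearSeries_of_eventually h2
    filter_upwards [Ioo_mem_nhds (by norm_num : (-1:ℝ) < 0) (by norm_num : (0:ℝ) < 1)] with t ht
      using h t ht
  exact (FormalMultilinearSeries.ofScalars_series_eq_iff (E := ℝ) a b).mp heq

lemma pmf_le_one {f : ℕ → ℝ} (hf : IsPMF f) (n : ℕ) : |f n| ≤ 1 := by
  rw [abs_of_nonneg (hf.1 n)]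
  exact le_hasSum hf.2 n fun j _ => hf.1 j

lemma thin_nonneg {f : ℕ → ℝ} (hf : IsPMF f) {p : ℝ} (hp0 : 0 < p) (hp1 : p ≤ 1) (m : ℕ) :
    0 ≤ thin p f m := by
  apply tsum_nonneg
  intro k
  have h1p : (0:ℝ) ≤ 1 - p := by linarith
  exact mul_nonneg (mul_nonneg (mul_nonneg (hf.1 _) (by positivity)) (by positivity)) (by positivity)

lemma thin_le_one {f : ℕ → ℝ} (hf : IsPMF f) {p : ℝ} (hp0 : 0 < p) (hp1 : p ≤ 1) (m : ℕ) :
    |thin p f m| ≤ 1 := by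
  have h := thin_pgf f hf hp0 hp1 (t := 1) (by norm_num)
  have hs : Summable (thin p f) := by simpa using h.1
  have ht : ∑' m, thin p f m = 1 := by
    have := h.2
    simpa using this.trans (by simpa using hf.2.tsum_eq)
  rw [abs_of_nonneg (thin_nonneg hf hp0 hp1 m), ← ht]
  exact Summable.le_tsum hs m fun j _ => thin_nonneg hf hp0 hp1 j

lemma exists_mu {M : ℝ≥0∞} {x : ℝ} (hx : x < 0) (hxM : ENNReal.ofReal (-x) < 2 * M) :
    ∃ μ : ℝ, 0 < μ ∧ ENNReal.ofReal μ < M ∧ -x < 2 * μ := by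
  by_cases hM : M = ⊤
  · exact ⟨-x/2 + 1, by linarith, by simp [hM], by linarith⟩
  · have h2M : 2 * M ≠ ⊤ := by
      simp [ENNReal.mul_eq_top, hM]
    have hxr : -x < (2*M).toReal := by
      rwa [ENNReal.ofReal_lt_iff_lt_toReal (by linarith) h2M] at hxM
    have h2Mt : (2*M).toReal = 2 * M.toReal := by
      rw [ENNReal.toReal_mul]; norm_num
    have hMr : -x < 2 * M.toReal := by rwa [h2Mt] at hxr
    refine ⟨(-x/2 + M.toReal)/2, by linarith, ?_, by linarith⟩
    rw [ENNReal.ofReal_lt_iff_lt_toReal (by linarith) hM]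
    linarith

lemma Ioo_subset_negIoo {M : ℝ≥0∞} {μ : ℝ} (hμ0 : 0 < μ) (hμM : ENNReal.ofReal μ < M) :
    Set.Ioo (-(2*μ)) 0 ⊆ negIoo M := by
  rintro x ⟨h1, h2⟩
  refine ⟨h2, ?_⟩
  calc ENNReal.ofReal (-x) < ENNReal.ofReal (2*μ) := by
        rw [ENNReal.ofReal_lt_ofReal_iff (by positivity)]; linarith
    _ = 2 * ENNReal.ofReal μ := by
        rw [ENNReal.ofReal_mul (by norm_num)]; norm_num
    _ < 2 * M := (ENNReal.mul_lt_mul_iff_right two_ne_zero ENNReal.ofNat_ne_top).mpr hμM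

/-- Corollary 1: a family of pmfs `f_{μ,ξ}` on `ℕ` with mean `μ`, indexed by
`ξ ∈ Ξ ⊆ ℝ^{r-1}` (a parameter invariant under binomial subsampling) and
`μ ∈ (0, M_ξ)`, is closed under binomial subsampling (`T_p f_{μ,ξ} = f_{pμ,ξ}`) if and
only if for each `ξ` its pgfs have the form `g(μ(t-1), ξ)` for a real analytic function
`g(·, ξ)` on `(-2M_ξ, 0)`. -/
theorem corollary1 (r : ℕ) (hr : 1 ≤ r) (Ξ : Set (Fin (r - 1) → ℝ))
    (M : (Fin (r - 1) → ℝ) → ℝ≥0∞) (hM : ∀ ξ ∈ Ξ, 0 < M ξ)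
    (f : (Fin (r - 1) → ℝ) → ℝ → ℕ → ℝ)
    (hpmf : ∀ ξ ∈ Ξ, ∀ μ : ℝ, 0 < μ → ENNReal.ofReal μ < M ξ → IsPMF (f ξ μ))
    (hmean : ∀ ξ ∈ Ξ, ∀ μ : ℝ, 0 < μ → ENNReal.ofReal μ < M ξ →
      HasSum (fun n : ℕ => (n : ℝ) * f ξ μ n) μ) :
    (∀ ξ ∈ Ξ, ∀ μ : ℝ, 0 < μ → ENNReal.ofReal μ < M ξ →
        ∀ p ∈ Set.Ioc (0 : ℝ) 1, thin p (f ξ μ) = f ξ (p * μ)) ↔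
    (∀ ξ ∈ Ξ, ∃ g : ℝ → ℝ, AnalyticOnNhd ℝ g (negIoo (M ξ)) ∧
        ∀ μ : ℝ, 0 < μ → ENNReal.ofReal μ < M ξ →
          ∀ t ∈ Set.Ioo (-1 : ℝ) 1, ∑' n : ℕ, f ξ μ n * t ^ n = g (μ * (t - 1))) := by
  constructor
  · -- forward direction
    intro hcl ξ hξ
    set Φ : ℝ → ℝ → ℝ := fun μ t => ∑' n, f ξ μ n * t ^ n with hΦ
    -- consistency, ordered version
    have key' : ∀ μ₁ μ₂ : ℝ, 0 < μ₁ → ENNReal.ofReal μ₁ < M ξ →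
        0 < μ₂ → ENNReal.ofReal μ₂ < M ξ → μ₁ ≤ μ₂ → ∀ x : ℝ, x < 0 → -x < 2*μ₁ → -x < 2*μ₂ →
        Φ μ₁ (1 + x/μ₁) = Φ μ₂ (1 + x/μ₂) := by
      intro μ₁ μ₂ h1 h1M h2 h2M h12 x hx0 hx1 hx2
      set p := μ₁ / μ₂ with hp
      have hp0 : 0 < p := div_pos h1 h2
      have hp1 : p ≤ 1 := (div_le_one h2).mpr h12
      have hthin : thin p (f ξ μ₂) = f ξ (p * μ₂) := hcl ξ hξ μ₂ h2 h2M p ⟨hp0, hp1⟩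
      have hpμ : p * μ₂ = μ₁ := div_mul_cancel₀ μ₁ (ne_of_gt h2)
      have htd : x / μ₁ < 0 := div_neg_of_neg_of_pos hx0 h1
      have htd2 : -(x / μ₁) < 2 := by
        rw [← neg_div]
        exact (div_lt_iff₀ h1).mpr (by linarith)
      have ht : |1 + x / μ₁| ≤ 1 := by
        rw [abs_le]
        constructor <;> linarith
      have := (thin_pgf (f ξ μ₂) (hpmf ξ hξ μ₂ h2 h2M) hp0 hp1 ht).2
      rw [hthin, hpμ] at this
      have harg : 1 + p * ((1 + x / μ₁) - 1) = 1 + x / μ₂ := by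
        rw [hp]
        field_simp
        ring
      rw [harg] at this
      exact this
    have key : ∀ μ₁ μ₂ : ℝ, 0 < μ₁ → ENNReal.ofReal μ₁ < M ξ →
        0 < μ₂ → ENNReal.ofReal μ₂ < M ξ → ∀ x : ℝ, x < 0 → -x < 2*μ₁ → -x < 2*μ₂ →
        Φ μ₁ (1 + x/μ₁) = Φ μ₂ (1 + x/μ₂) := by
      intro μ₁ μ₂ h1 h1M h2 h2M x hx0 hx1 hx2
      rcases le_total μ₁ μ₂ with h | h
      · exact key' μ₁ μ₂ h1 h1M h2 h2M h x hx0 hx1 hx2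
      · exact (key' μ₂ μ₁ h2 h2M h1 h1M h x hx0 hx2 hx1).symm
    have hch : ∀ x ∈ negIoo (M ξ), ∃ μ : ℝ, 0 < μ ∧ ENNReal.ofReal μ < M ξ ∧ -x < 2 * μ :=
      fun x hx => exists_mu hx.1 hx.2
    classical
    set μof : ℝ → ℝ := fun x => if h : x ∈ negIoo (M ξ) then (hch x h).choose else 1 with hμof
    refine ⟨fun x => Φ (μof x) (1 + x / μof x), ?_, ?_⟩
    case _ =>
      -- the defining property first
      have gspec : ∀ x (_ : x ∈ negIoo (M ξ)), ∀ μ : ℝ, 0 < μ → ENNReal.ofReal μ < M ξ →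
          -x < 2*μ → Φ (μof x) (1 + x / μof x) = Φ μ (1 + x/μ) := by
        intro x hx μ hμ0 hμM hμx
        rw [hμof]
        simp only [dif_pos hx]
        obtain ⟨c1, c2, c3⟩ := (hch x hx).choose_spec
        exact key _ μ c1 c2 hμ0 hμM x hx.1 c3 hμx
      intro x₀ hx₀
      obtain ⟨μ₀, hμ₀0, hμ₀M, hμ₀x⟩ := hch x₀ hx₀
      have hmem : x₀ ∈ Set.Ioo (-(2*μ₀)) 0 := ⟨by linarith, hx₀.1⟩
      have houter : AnalyticAt ℝ (fun t => ∑' n, f ξ μ₀ n * t ^ n) (1 + x₀ / μ₀) := by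
        apply analyticAt_pgf _ 1 (pmf_le_one (hpmf ξ hξ μ₀ hμ₀0 hμ₀M))
        rw [abs_lt]
        have hd1 : x₀ / μ₀ < 0 := div_neg_of_neg_of_pos hx₀.1 hμ₀0
        have hd2 : -x₀ / μ₀ < 2 := (div_lt_iff₀ hμ₀0).mpr (by linarith)
        rw [neg_div] at hd2
        constructor <;> linarith
      have hinner : AnalyticAt ℝ (fun x : ℝ => 1 + x / μ₀) x₀ :=
        analyticAt_const.add (analyticAt_id.div analyticAt_const (ne_of_gt hμ₀0))
      have hcomp := AnalyticAt.comp (f := fun x : ℝ => 1 + x / μ₀) (x := x₀) houter hinner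
      apply hcomp.congr
      filter_upwards [Ioo_mem_nhds hmem.1 hmem.2] with x hx
      have hxneg : x ∈ negIoo (M ξ) := Ioo_subset_negIoo hμ₀0 hμ₀M hx
      have := gspec x hxneg μ₀ hμ₀0 hμ₀M (by have := hx.1; linarith)
      simp only [Function.comp]
      exact this.symm
    case _ =>
      intro μ hμ0 hμM t ht
      set x := μ * (t - 1) with hx
      have hx0 : x < 0 := mul_neg_of_pos_of_neg hμ0 (by linarith [ht.2])
      have hx2 : -x < 2 * μ := by nlinarith [ht.1, ht.2]
      have hxneg : x ∈ negIoo (M ξ) := Ioo_subset_negIoo hμ0 hμM ⟨by linarith, hx0⟩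
      have gspec : ∀ x' (_ : x' ∈ negIoo (M ξ)), ∀ ν : ℝ, 0 < ν → ENNReal.ofReal ν < M ξ →
          -x' < 2*ν → Φ (μof x') (1 + x' / μof x') = Φ ν (1 + x'/ν) := by
        intro x' hx' ν hν0 hνM hνx
        rw [hμof]
        simp only [dif_pos hx']
        obtain ⟨c1, c2, c3⟩ := (hch x' hx').choose_spec
        exact key _ ν c1 c2 hν0 hνM x' hx'.1 c3 hνx
      have := gspec x hxneg μ hμ0 hμM hx2
      show ∑' n, f ξ μ n * t ^ n = Φ (μof x) (1 + x / μof x)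
      rw [this]
      have harg : 1 + x / μ = t := by
        rw [hx]
        field_simp
        ring
      rw [harg]
  · -- converse direction
    intro hg ξ hξ μ hμ0 hμM p hp
    obtain ⟨g, hgan, hgeq⟩ := hg ξ hξ
    have hfμ := hpmf ξ hξ μ hμ0 hμM
    have hpμ0 : 0 < p * μ := mul_pos hp.1 hμ0
    have hpμM : ENNReal.ofReal (p * μ) < M ξ :=
      lt_of_le_of_lt (ENNReal.ofReal_le_ofReal (by nlinarith [hp.2])) hμM
    apply coeff_unique (thin p (f ξ μ)) (f ξ (p * μ)) 1 1
      (thin_le_one hfμ hp.1 hp.2) (pmf_le_one (hpmf ξ hξ (p*μ) hpμ0 hpμM))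
    intro t ht
    have ht' : |t| ≤ 1 := by rw [abs_le]; exact ⟨ht.1.le, ht.2.le⟩
    rw [(thin_pgf (f ξ μ) hfμ hp.1 hp.2 ht').2]
    have hmem : (1 + p * (t - 1)) ∈ Set.Ioo (-1 : ℝ) 1 := by
      constructor
      · nlinarith [ht.1, hp.2, hp.1]
      · nlinarith [ht.2, hp.1]
    rw [hgeq μ hμ0 hμM _ hmem, hgeq (p*μ) hpμ0 hpμM t ht]
    ring_nf
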